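/- Let f : ℝ^d → ℝ have L_g-Lipschitz gradient and let z_t = x_t + (β₁/(1−β₁))(x_t − x_{t−1}) with β₁ ∈ [0,1). Then f(z_{t+1}) − f(z_t) ≤ ⟨∇f(x_t), z_{t+1} − z_t⟩ + (2L_g/(1−β₁)²)‖x_{t+1} − x_t‖² + (5 L_g β₁²/(2(1−β₁)²))‖x_t − x_{t−1}‖². -/

import Mathlib

open scoped RealInnerProductSpace

section Aux

variable {d : ℕ}

lemma grad_lip_cont {f : EuclideanSpace ℝ (Fin d) → ℝ} {Lg : ℝ} (hLg : 0 ≤ Lg)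
    (hgrad : ∀ x y, ‖gradient f x - gradient f y‖ ≤ Lg * ‖x - y‖) :
    Continuous (gradient f) := by
  have : LipschitzWith ⟨Lg, hLg⟩ (gradient f) := by
    apply LipschitzWith.of_dist_le_mul
    intro x y
    rw [dist_eq_norm, dist_eq_norm]
    exact hgrad x y
  exact this.continuous

/-- Quadratic descent lemma. -/
lemma descent_lemma {f : EuclideanSpace ℝ (Fin d) → ℝ} {Lg : ℝ} (hLg : 0 ≤ Lg)
    (hdiff : Differentiable ℝ f)
    (hgrad : ∀ x y, ‖gradient f x - gradient f y‖ ≤ Lg * ‖x - y‖)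
    (x y : EuclideanSpace ℝ (Fin d)) :
    f y - f x ≤ ⟪gradient f x, y - x⟫ + Lg / 2 * ‖y - x‖ ^ 2 := by
  set c : ℝ → EuclideanSpace ℝ (Fin d) := fun t => x + t • (y - x) with hc
  have hderiv : ∀ t : ℝ, HasDerivAt (fun t => f (c t)) ⟪gradient f (c t), y - x⟫ t := by
    intro t
    have hc' : HasDerivAt c (y - x) t := by
      have h0 := ((hasDerivAt_id t).smul_const (y - x)).const_add x
      rw [one_smul] at h0
      exact h0
    have hf : HasGradientAt f (gradient f (c t)) (c t) :=
      (hdiff (c t)).hasGradientAt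
    have := hf.hasFDerivAt.comp_hasDerivAt t hc'
    rw [InnerProductSpace.toDual_apply_apply] at this
    exact this
  have hcont : Continuous fun t => ⟪gradient f (c t), y - x⟫ := by
    have : Continuous c := by continuity
    exact ((grad_lip_cont hLg hgrad).comp this).inner continuous_const
  have hint : f y - f x = ∫ t in (0:ℝ)..1, ⟪gradient f (c t), y - x⟫ := by
    have h := intervalIntegral.integral_deriv_eq_sub' (a := (0:ℝ)) (b := (1:ℝ))
      (fun t => f (c t)) (f' := fun t => ⟪gradient f (c t), y - x⟫)
      (funext fun t => (hderiv t).deriv)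
      (fun t _ => (hderiv t).differentiableAt)
      (hcont.continuousOn)
    rw [h]
    simp [hc]
  have hbound : ∀ t ∈ Set.Icc (0:ℝ) 1,
      ⟪gradient f (c t), y - x⟫ ≤ ⟪gradient f x, y - x⟫ + Lg * t * ‖y - x‖ ^ 2 := by
    intro t ht
    have h1 : ⟪gradient f (c t) - gradient f x, y - x⟫ ≤ Lg * t * ‖y - x‖ ^ 2 := by
      calc ⟪gradient f (c t) - gradient f x, y - x⟫
          ≤ ‖gradient f (c t) - gradient f x‖ * ‖y - x‖ := real_inner_le_norm _ _
        _ ≤ (Lg * ‖c t - x‖) * ‖y - x‖ := by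
            exact mul_le_mul_of_nonneg_right (hgrad _ _) (norm_nonneg _)
        _ = Lg * t * ‖y - x‖ ^ 2 := by
            have : ‖c t - x‖ = t * ‖y - x‖ := by
              simp [hc, norm_smul, abs_of_nonneg ht.1]
            rw [this]; ring
    have := inner_sub_left (𝕜 := ℝ) (gradient f (c t)) (gradient f x) (y - x)
    linarith [h1, this.symm.le, this.le]
  have hcont2 : Continuous fun t : ℝ => Lg * t * ‖y - x‖ ^ 2 := by continuity
  rw [hint]
  calc (∫ t in (0:ℝ)..1, ⟪gradient f (c t), y - x⟫)
      ≤ ∫ t in (0:ℝ)..1, (⟪gradient f x, y - x⟫ + Lg * t * ‖y - x‖ ^ 2) := by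
        apply intervalIntegral.integral_mono_on (by norm_num)
        · exact hcont.intervalIntegrable _ _
        · exact (intervalIntegrable_const.add (hcont2.intervalIntegrable _ _))
        · exact hbound
    _ = ⟪gradient f x, y - x⟫ + Lg / 2 * ‖y - x‖ ^ 2 := by
        rw [intervalIntegral.integral_add intervalIntegrable_const (hcont2.intervalIntegrable _ _)]
        have h2 : (∫ t in (0:ℝ)..1, Lg * t * ‖y - x‖ ^ 2) = Lg / 2 * ‖y - x‖ ^ 2 := by
          have he : (fun t : ℝ => Lg * t * ‖y - x‖ ^ 2) = fun t => (Lg * ‖y - x‖ ^ 2) * t := by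
            funext t; ring
          rw [he, intervalIntegral.integral_const_mul, integral_id]; ring
        rw [h2]; simp

end Aux

/-- Descent-type bound along the auxiliary sequence `z_t = x_t + (β₁/(1−β₁))(x_t − x_{t−1})`:
if `f` has `L_g`-Lipschitz gradient and `β₁ ∈ [0,1)`, then
`f(z_{t+1}) − f(z_t) ≤ ⟨∇f(x_t), z_{t+1} − z_t⟩ + (2L_g/(1−β₁)²)‖x_{t+1} − x_t‖²
  + (5L_gβ₁²/(2(1−β₁)²))‖x_t − x_{t−1}‖²`. -/
theorem descent_along_z {d : ℕ}
    (f : EuclideanSpace ℝ (Fin d) → ℝ) (Lg : ℝ) (hLg : 0 ≤ Lg)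
    (hdiff : Differentiable ℝ f)
    (hgrad : ∀ x y, ‖gradient f x - gradient f y‖ ≤ Lg * ‖x - y‖)
    (β₁ : ℝ) (hβ : β₁ ∈ Set.Ico (0 : ℝ) 1)
    (xm x₀ xp : EuclideanSpace ℝ (Fin d)) :
    f (xp + (β₁ / (1 - β₁)) • (xp - x₀)) - f (x₀ + (β₁ / (1 - β₁)) • (x₀ - xm))
      ≤ ⟪gradient f x₀,
            (xp + (β₁ / (1 - β₁)) • (xp - x₀)) - (x₀ + (β₁ / (1 - β₁)) • (x₀ - xm))⟫
        + 2 * Lg / (1 - β₁) ^ 2 * ‖xp - x₀‖ ^ 2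
        + 5 * Lg * β₁ ^ 2 / (2 * (1 - β₁) ^ 2) * ‖x₀ - xm‖ ^ 2 := by
  obtain ⟨hβ0, hβ1⟩ := hβ
  have h1β : (0:ℝ) < 1 - β₁ := by linarith
  set s : ℝ := β₁ / (1 - β₁) with hs
  have hs0 : 0 ≤ s := div_nonneg hβ0 h1β.le
  set z : EuclideanSpace ℝ (Fin d) := x₀ + s • (x₀ - xm) with hz
  set z' : EuclideanSpace ℝ (Fin d) := xp + s • (xp - x₀) with hz'
  have hdesc := descent_lemma hLg hdiff hgrad z z'
  -- split the inner product
  have hsplit : ⟪gradient f z, z' - z⟫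
      = ⟪gradient f x₀, z' - z⟫ + ⟪gradient f z - gradient f x₀, z' - z⟫ := by
    rw [inner_sub_left]; ring
  have hzx : ‖z - x₀‖ = s * ‖x₀ - xm‖ := by
    simp [hz, norm_smul, abs_of_nonneg hs0]
  have hcross : ⟪gradient f z - gradient f x₀, z' - z⟫
      ≤ Lg / 2 * ‖z - x₀‖ ^ 2 + Lg / 2 * ‖z' - z‖ ^ 2 := by
    calc ⟪gradient f z - gradient f x₀, z' - z⟫
        ≤ ‖gradient f z - gradient f x₀‖ * ‖z' - z‖ := real_inner_le_norm _ _
      _ ≤ (Lg * ‖z - x₀‖) * ‖z' - z‖ :=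
          mul_le_mul_of_nonneg_right (hgrad _ _) (norm_nonneg _)
      _ ≤ Lg / 2 * ‖z - x₀‖ ^ 2 + Lg / 2 * ‖z' - z‖ ^ 2 := by
          nlinarith [sq_nonneg (‖z - x₀‖ - ‖z' - z‖), norm_nonneg (z - x₀), norm_nonneg (z' - z), hLg]
  have hzz : ‖z' - z‖ ^ 2 ≤ 2 * (1 + s) ^ 2 * ‖xp - x₀‖ ^ 2 + 2 * s ^ 2 * ‖x₀ - xm‖ ^ 2 := by
    have hdecomp : z' - z = (1 + s) • (xp - x₀) - s • (x₀ - xm) := by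
      simp only [hz, hz']
      module
    calc ‖z' - z‖ ^ 2 ≤ (‖(1 + s) • (xp - x₀ : EuclideanSpace ℝ (Fin d))‖ + ‖s • (x₀ - xm : EuclideanSpace ℝ (Fin d))‖) ^ 2 := by
          rw [hdecomp]
          exact pow_le_pow_left₀ (norm_nonneg _) (norm_sub_le _ _) 2
      _ ≤ 2 * (1 + s) ^ 2 * ‖xp - x₀‖ ^ 2 + 2 * s ^ 2 * ‖x₀ - xm‖ ^ 2 := by
          rw [norm_smul, norm_smul, Real.norm_eq_abs, Real.norm_eq_abs,
            abs_of_nonneg (by linarith : (0:ℝ) ≤ 1 + s), abs_of_nonneg hs0]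
          nlinarith [sq_nonneg ((1 + s) * ‖xp - x₀‖ - s * ‖x₀ - xm‖)]
  have h1s : 1 + s = 1 / (1 - β₁) := by
    field_simp [hs]
    rw [hs, add_mul, div_mul_cancel₀ _ h1β.ne']
    ring
  have hs2 : s ^ 2 = β₁ ^ 2 / (1 - β₁) ^ 2 := by
    rw [hs]; rw [div_pow]
  have key : f z' - f z ≤ ⟪gradient f x₀, z' - z⟫
      + Lg * ‖z' - z‖ ^ 2 + Lg / 2 * ‖z - x₀‖ ^ 2 := by
    rw [hsplit] at hdesc; linarith
  have hnn1 : (0:ℝ) ≤ ‖xp - x₀‖ ^ 2 := sq_nonneg _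
  have hnn2 : (0:ℝ) ≤ ‖x₀ - xm‖ ^ 2 := sq_nonneg _
  have h4 : (1 + s) ^ 2 = 1 / (1 - β₁) ^ 2 := by rw [h1s, div_pow]; norm_num
  have hfin : Lg * ‖z' - z‖ ^ 2 + Lg / 2 * ‖z - x₀‖ ^ 2
      ≤ 2 * Lg / (1 - β₁) ^ 2 * ‖xp - x₀‖ ^ 2
        + 5 * Lg * β₁ ^ 2 / (2 * (1 - β₁) ^ 2) * ‖x₀ - xm‖ ^ 2 := by
    have h2 : Lg * ‖z' - z‖ ^ 2 ≤ Lg * (2 * (1 + s) ^ 2 * ‖xp - x₀‖ ^ 2 + 2 * s ^ 2 * ‖x₀ - xm‖ ^ 2) :=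
      mul_le_mul_of_nonneg_left hzz hLg
    have h3 : ‖z - x₀‖ ^ 2 = s ^ 2 * ‖x₀ - xm‖ ^ 2 := by rw [hzx]; ring
    have heq : Lg * (2 * (1 + s) ^ 2 * ‖xp - x₀‖ ^ 2 + 2 * s ^ 2 * ‖x₀ - xm‖ ^ 2)
        + Lg / 2 * (s ^ 2 * ‖x₀ - xm‖ ^ 2)
        = 2 * Lg / (1 - β₁) ^ 2 * ‖xp - x₀‖ ^ 2
          + 5 * Lg * β₁ ^ 2 / (2 * (1 - β₁) ^ 2) * ‖x₀ - xm‖ ^ 2 := by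
      rw [h4, hs2]
      have hpos : (1 - β₁) ^ 2 ≠ 0 := by positivity
      field_simp
      ring
    rw [h3]
    linarith [h2, heq.le, heq.ge]
  linarith [key, hfin]
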